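/- arXiv:1812.00617 — 2 statements merged into one kernel-verified Lean document; each statement's English description precedes it below -/
import Mathlib

section
/- For n ≥ 4 and distinct i, j ∈ {3,...,n}, the set S = {e, (e·g_i^+)·g_j^+, (e·g_j^+)·g_i^+} (where e is the identity permutation) is an independent set in the alternating group graph AG_n whose neighborhood has size exactly 6n - 16. -/
/-- The 3-rotation `g_i^+` (rotate symbols at positions 1,2,i from left to right,
in 0-based indexing positions 0,1,i): swap positions 1,i then swap positions 0,1. -/
def gPlus (n : ℕ) [NeZero n] (i : Fin n) : Equiv.Perm (Fin n) :=
  Equiv.swap 1 i * Equiv.swap 0 1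

/-- The 3-rotation `g_i^-` (rotate symbols at positions 1,2,i from right to left). -/
def gMinus (n : ℕ) [NeZero n] (i : Fin n) : Equiv.Perm (Fin n) :=
  Equiv.swap 0 i * Equiv.swap 0 1

/-- The generating relation of the alternating group graph: `q` is obtained from `p`
by a 3-rotation `g_i^±` with `3 ≤ i ≤ n` (0-based: `2 ≤ i.val`). -/
def agRel (n : ℕ) [NeZero n] (p q : Equiv.Perm (Fin n)) : Prop :=
  ∃ i : Fin n, 2 ≤ i.val ∧ (q = p * gPlus n i ∨ q = p * gMinus n i)

/-- The alternating group graph `AG_n`, a Cayley graph on the even permutations. -/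
def AG (n : ℕ) [NeZero n] :
    SimpleGraph {p : Equiv.Perm (Fin n) // Equiv.Perm.sign p = 1} :=
  SimpleGraph.fromRel (fun p q => agRel n p.1 q.1)

/-- The split-star graph `S_n^2`, a Cayley graph on all permutations, with the
2-exchange `g_{12}` together with the 3-rotations as generators. -/
def SplitStar (n : ℕ) [NeZero n] : SimpleGraph (Equiv.Perm (Fin n)) :=
  SimpleGraph.fromRel (fun p q => q = p * Equiv.swap 0 1 ∨ agRel n p q)

/-- The (external) neighborhood of a vertex set. -/
def nbhd {V : Type*} (G : SimpleGraph V) (S : Set V) : Set V :=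
  {v | v ∉ S ∧ ∃ u ∈ S, G.Adj u v}

/-- An independent set: pairwise nonadjacent vertices. -/
def IsIndep {V : Type*} (G : SimpleGraph V) (S : Set V) : Prop :=
  ∀ u ∈ S, ∀ v ∈ S, ¬ G.Adj u v

/-- The `ℓ`-component connectivity: the minimum size of a vertex set `F` whose
removal results in a graph with at least `ℓ` components or fewer than `ℓ` vertices. -/
noncomputable def compConn {V : Type*} (G : SimpleGraph V) (l : ℕ) : ℕ :=
  sInf {k | ∃ F : Set V, F.ncard = k ∧
    (l ≤ Nat.card (G.induce Fᶜ).ConnectedComponent ∨ (Fᶜ : Set V).ncard < l)}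

namespace AGaux
variable {n : ℕ} [NeZero n]

lemma val1 (hn : 2 ≤ n) : ((1 : Fin n) : ℕ) = 1 := by
  rw [Fin.val_one']; exact Nat.mod_eq_of_lt (by omega)

lemma ne0 {k : Fin n} (hk : 2 ≤ k.val) : k ≠ 0 := by
  intro h; rw [h] at hk; simp at hk

lemma ne1 {k : Fin n} (hk : 2 ≤ k.val) : k ≠ 1 := by
  intro h; rw [h, Fin.val_one'] at hk
  have := Nat.mod_le 1 n; omega

lemma gP0 (k : Fin n) : gPlus n k 0 = k := by
  simp [gPlus, Equiv.swap_apply_def]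

lemma gP1 {k : Fin n} (hk : 2 ≤ k.val) : gPlus n k 1 = 0 := by
  have h1 : n ≠ 1 := by have := k.isLt; omega
  simp [gPlus, Equiv.swap_apply_def, (ne0 hk).symm, h1]

lemma gPk {k : Fin n} (h0 : k ≠ 0) (h1 : k ≠ 1) : gPlus n k k = 1 := by
  simp [gPlus, Equiv.swap_apply_def, h0, h1]

lemma gPo {k m : Fin n} (m0 : m ≠ 0) (m1 : m ≠ 1) (mk : m ≠ k) : gPlus n k m = m := by
  simp [gPlus, Equiv.swap_apply_def, m0, m1, mk]

lemma gM0 {k : Fin n} (hk : 2 ≤ k.val) : gMinus n k 0 = 1 := by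
  have hn1 : n ≠ 1 := by have := k.isLt; omega
  simp [gMinus, Equiv.swap_apply_def, ne0 hk, ne1 hk, (ne0 hk).symm, (ne1 hk).symm, hn1]

lemma gM1 (k : Fin n) : gMinus n k 1 = k := by
  simp [gMinus, Equiv.swap_apply_def]

lemma gMk {k : Fin n} (h0 : k ≠ 0) (h1 : k ≠ 1) : gMinus n k k = 0 := by
  simp [gMinus, Equiv.swap_apply_def, h0, h1]

lemma gMo {k m : Fin n} (m0 : m ≠ 0) (m1 : m ≠ 1) (mk : m ≠ k) : gMinus n k m = m := by
  simp [gMinus, Equiv.swap_apply_def, m0, m1, mk]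

end AGaux

namespace AGaux
set_option linter.unusedSectionVars false
variable {n : ℕ} [NeZero n]

def Gen (n : ℕ) [NeZero n] (x : Equiv.Perm (Fin n)) : Prop :=
  ∃ k : Fin n, 2 ≤ k.val ∧ (x = gPlus n k ∨ x = gMinus n k)

lemma gPgM {k : Fin n} (hk : 2 ≤ k.val) : gPlus n k * gMinus n k = 1 := by
  have h0 := ne0 hk; have h1 := ne1 hk
  apply Equiv.ext; intro m
  rcases eq_or_ne m 0 with rfl|m0
  · simp [Equiv.Perm.mul_apply, gM0 hk, gP1 hk]
  rcases eq_or_ne m 1 with rfl|m1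
  · simp [Equiv.Perm.mul_apply, gM1, gPk h0 h1]
  rcases eq_or_ne m k with rfl|mk
  · simp [Equiv.Perm.mul_apply, gMk h0 h1, gP0]
  · simp [Equiv.Perm.mul_apply, gMo m0 m1 mk, gPo m0 m1 mk]

lemma gP_inv {k : Fin n} (hk : 2 ≤ k.val) : (gPlus n k)⁻¹ = gMinus n k :=
  inv_eq_of_mul_eq_one_right (gPgM hk)

lemma gM_inv {k : Fin n} (hk : 2 ≤ k.val) : (gMinus n k)⁻¹ = gPlus n k :=
  inv_eq_of_mul_eq_one_left (gPgM hk)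

lemma zero_ne_one' (hn : 2 ≤ n) : (0 : Fin n) ≠ 1 := by
  intro h
  have := congrArg Fin.val h
  rw [val1 hn] at this; simp at this

lemma Gen.inv {x : Equiv.Perm (Fin n)} (h : Gen n x) : Gen n x⁻¹ := by
  obtain ⟨k, hk, rfl|rfl⟩ := h
  · exact ⟨k, hk, Or.inr (gP_inv hk)⟩
  · exact ⟨k, hk, Or.inl (gM_inv hk)⟩

lemma Gen.n2 {x : Equiv.Perm (Fin n)} (h : Gen n x) : 2 ≤ n := by
  obtain ⟨k, hk, _⟩ := h; have := k.isLt; omega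

lemma Gen.apply_one_ne {x : Equiv.Perm (Fin n)} (h : Gen n x) : x 1 ≠ 1 := by
  obtain ⟨k, hk, rfl|rfl⟩ := h
  · rw [gP1 hk]; exact zero_ne_one' (by have := k.isLt; omega)
  · rw [gM1]; exact ne1 hk

lemma Gen.apply_zero_ne {x : Equiv.Perm (Fin n)} (h : Gen n x) : x 0 ≠ 0 := by
  obtain ⟨k, hk, rfl|rfl⟩ := h
  · rw [gP0]; exact ne0 hk
  · rw [gM0 hk]; exact (zero_ne_one' (by have := k.isLt; omega)).symm

lemma notGen_one (n : ℕ) [NeZero n] : ¬ Gen n 1 := fun h => h.apply_one_ne rfl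

lemma Gen.ne_one {x : Equiv.Perm (Fin n)} (h : Gen n x) : x ≠ 1 := by
  rintro rfl; exact notGen_one n h

lemma Gen.sign {x : Equiv.Perm (Fin n)} (h : Gen n x) : Equiv.Perm.sign x = 1 := by
  obtain ⟨k, hk, rfl|rfl⟩ := h
  · rw [gPlus, map_mul, Equiv.Perm.sign_swap (ne1 hk).symm,
      Equiv.Perm.sign_swap (zero_ne_one' (by have := k.isLt; omega))]; norm_num
  · rw [gMinus, map_mul, Equiv.Perm.sign_swap (ne0 hk).symm,
      Equiv.Perm.sign_swap (zero_ne_one' (by have := k.isLt; omega))]; norm_num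

section AB
variable (i j : Fin n) (hi : 2 ≤ i.val) (hj : 2 ≤ j.val) (hij : i ≠ j)

/-- `A i j = gPlus i * gPlus j = (0 j)(1 i)`. -/
local notation "A" => gPlus n i * gPlus n j

include hi hj hij

lemma A0 : (A) 0 = j := by
  rw [Equiv.Perm.mul_apply, gP0, gPo (ne0 hj) (ne1 hj) (Ne.symm hij)]

lemma A1 : (A) 1 = i := by
  rw [Equiv.Perm.mul_apply, gP1 hj, gP0]

lemma Ai : (A) i = 1 := by
  rw [Equiv.Perm.mul_apply, gPo (ne0 hi) (ne1 hi) hij, gPk (ne0 hi) (ne1 hi)]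

lemma Aj : (A) j = 0 := by
  rw [Equiv.Perm.mul_apply, gPk (ne0 hj) (ne1 hj), gP1 hi]

lemma Ao {m : Fin n} (m0 : m ≠ 0) (m1 : m ≠ 1) (mi : m ≠ i) (mj : m ≠ j) :
    (A) m = m := by
  rw [Equiv.Perm.mul_apply, gPo m0 m1 mj, gPo m0 m1 mi]

lemma AA : (A) * (A) = 1 := by
  apply Equiv.ext; intro m
  rcases eq_or_ne m 0 with rfl|m0
  · simp [Equiv.Perm.mul_apply, A0 i j hi hj hij, Aj i j hi hj hij]
  rcases eq_or_ne m 1 with rfl|m1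
  · simp [Equiv.Perm.mul_apply, A1 i j hi hj hij, Ai i j hi hj hij]
  rcases eq_or_ne m i with h|mi
  · rw [h]
    simp [Equiv.Perm.mul_apply, Ai i j hi hj hij, A1 i j hi hj hij]
  rcases eq_or_ne m j with h'|mj
  · rw [h']
    simp [Equiv.Perm.mul_apply, Aj i j hi hj hij, A0 i j hi hj hij]
  · simp [Equiv.Perm.mul_apply, Ao i j hi hj hij m0 m1 mi mj]

lemma A_inv : (A)⁻¹ = A := inv_eq_of_mul_eq_one_right (AA i j hi hj hij)

lemma notGen_A : ¬ Gen n (A) := by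
  rintro ⟨k, hk, h|h⟩
  · have h1 : (A) 1 = 0 := by rw [h, gP1 hk]
    rw [A1 i j hi hj hij] at h1
    exact ne0 hi h1
  · have h1 : (A) 0 = 1 := by rw [h, gM0 hk]
    rw [A0 i j hi hj hij] at h1
    exact ne1 hj h1

/-- `C = A * B = (0 1)(i j)` where `B = gPlus j * gPlus i`. -/
lemma C0 : ((A) * (gPlus n j * gPlus n i)) 0 = 1 := by
  rw [Equiv.Perm.mul_apply, A0 j i hj hi (Ne.symm hij), Ai i j hi hj hij]

lemma C1 : ((A) * (gPlus n j * gPlus n i)) 1 = 0 := by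
  rw [Equiv.Perm.mul_apply, A1 j i hj hi (Ne.symm hij), Aj i j hi hj hij]

lemma notGen_C : ¬ Gen n ((A) * (gPlus n j * gPlus n i)) := by
  rintro ⟨k, hk, h|h⟩
  · have h1 : ((A) * (gPlus n j * gPlus n i)) 0 = k := by rw [h, gP0]
    rw [C0 i j hi hj hij] at h1
    exact ne1 hk h1.symm
  · have h1 : ((A) * (gPlus n j * gPlus n i)) 1 = k := by rw [h, gM1]
    rw [C1 i j hi hj hij] at h1
    exact ne0 hk h1.symm

lemma notGen_C_mul {y : Equiv.Perm (Fin n)} (hy : Gen n y) :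
    ¬ Gen n ((A) * (gPlus n j * gPlus n i) * y) := by
  intro hc
  obtain ⟨k, hk, rfl|rfl⟩ := hy
  · apply hc.apply_one_ne
    rw [Equiv.Perm.mul_apply, gP1 hk, C0 i j hi hj hij]
  · apply hc.apply_zero_ne
    rw [Equiv.Perm.mul_apply, gM0 hk, C1 i j hi hj hij]

lemma AgP : (A) * gPlus n i = gMinus n j := by
  have h0i := ne0 hi; have h1i := ne1 hi; have h0j := ne0 hj; have h1j := ne1 hj
  apply Equiv.ext; intro m
  rcases eq_or_ne m 0 with rfl|m0
  · rw [Equiv.Perm.mul_apply, gP0, Ai i j hi hj hij, gM0 hj]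
  rcases eq_or_ne m 1 with rfl|m1
  · rw [Equiv.Perm.mul_apply, gP1 hi, A0 i j hi hj hij, gM1]
  rcases eq_or_ne m i with h|mi
  · rw [h]
    rw [Equiv.Perm.mul_apply, gPk h0i h1i, A1 i j hi hj hij, gMo h0i h1i hij]
  rcases eq_or_ne m j with h'|mj
  · rw [h']
    rw [Equiv.Perm.mul_apply, gPo h0j h1j (Ne.symm hij), Aj i j hi hj hij,
      gMk h0j h1j]
  · rw [Equiv.Perm.mul_apply, gPo m0 m1 mi, Ao i j hi hj hij m0 m1 mi mj,
      gMo m0 m1 mj]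

lemma AgM : (A) * gMinus n j = gPlus n i := by
  have := congrArg (fun x => (A) * x) (AgP i j hi hj hij)
  rw [← this, ← mul_assoc, AA i j hi hj hij, one_mul]

lemma classify {x : Equiv.Perm (Fin n)} (hx : Gen n x) (hax : Gen n ((A) * x)) :
    x = gPlus n i ∨ x = gMinus n j := by
  obtain ⟨k, hk, rfl|rfl⟩ := hx
  · left
    obtain ⟨l, hl, h|h⟩ := hax
    · exfalso
      have h1 : ((A) * gPlus n k) 1 = 0 := by rw [h, gP1 hl]
      rw [Equiv.Perm.mul_apply, gP1 hk, A0 i j hi hj hij] at h1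
      exact ne0 hj h1
    · have h1 : ((A) * gPlus n k) 0 = 1 := by rw [h, gM0 hl]
      rw [Equiv.Perm.mul_apply, gP0] at h1
      have : (A) k = (A) i := by rw [h1, Ai i j hi hj hij]
      rw [(Equiv.injective _).eq_iff] at this
      rw [this]
  · right
    obtain ⟨l, hl, h|h⟩ := hax
    · have h1 : ((A) * gMinus n k) 1 = 0 := by rw [h, gP1 hl]
      rw [Equiv.Perm.mul_apply, gM1] at h1
      have : (A) k = (A) j := by rw [h1, (Aj i j hi hj hij).symm]
      rw [(Equiv.injective _).eq_iff] at this
      rw [this]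
    · exfalso
      have h1 : ((A) * gMinus n k) 0 = 1 := by rw [h, gM0 hl]
      rw [Equiv.Perm.mul_apply, gM0 hk, A1 i j hi hj hij] at h1
      exact ne1 hi h1

end AB
end AGaux

namespace AGaux
variable {n : ℕ} [NeZero n]

def GenSet (n : ℕ) [NeZero n] : Set (Equiv.Perm (Fin n)) := {x | Gen n x}

def ASet (n : ℕ) [NeZero n] (i j : Fin n) : Set (Equiv.Perm (Fin n)) :=
  (fun y => gPlus n i * gPlus n j * y) '' GenSet n

lemma hPinj : Function.Injective (gPlus n) := by
  intro k l h
  have := Equiv.ext_iff.mp h 0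
  rwa [gP0, gP0] at this

lemma hMinj : Function.Injective (gMinus n) := by
  intro k l h
  have := Equiv.ext_iff.mp h 1
  rwa [gM1, gM1] at this

lemma card_K (hn : 2 ≤ n) : ({k : Fin n | 2 ≤ k.val} : Set (Fin n)).ncard = n - 2 := by
  have hcompl : ({k : Fin n | 2 ≤ k.val} : Set (Fin n))ᶜ = {0, 1} := by
    ext k
    simp only [Set.mem_compl_iff, Set.mem_setOf_eq, not_le, Set.mem_insert_iff,
      Set.mem_singleton_iff]
    constructor
    · intro hk
      have : k.val = 0 ∨ k.val = 1 := by omega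
      rcases this with h|h
      · left; exact Fin.ext (by simpa using h)
      · right; exact Fin.ext (by rw [h, val1 hn])
    · rintro (rfl|rfl)
      · simp
      · rw [val1 hn]; omega
  have h := Set.ncard_add_ncard_compl ({k : Fin n | 2 ≤ k.val} : Set (Fin n))
  rw [hcompl, Set.ncard_pair (zero_ne_one' hn), Nat.card_eq_fintype_card,
    Fintype.card_fin] at h
  omega

lemma card_GenSet (hn : 2 ≤ n) : (GenSet n).ncard = 2 * n - 4 := by
  have hGS : GenSet n = gPlus n '' {k : Fin n | 2 ≤ k.val} ∪
      gMinus n '' {k : Fin n | 2 ≤ k.val} := by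
    ext x
    simp only [GenSet, Set.mem_union, Set.mem_image, Set.mem_setOf_eq, Gen]
    constructor
    · rintro ⟨k, hk, h|h⟩
      · exact Or.inl ⟨k, hk, h.symm⟩
      · exact Or.inr ⟨k, hk, h.symm⟩
    · rintro (⟨k,hk,h⟩|⟨k,hk,h⟩)
      · exact ⟨k, hk, Or.inl h.symm⟩
      · exact ⟨k, hk, Or.inr h.symm⟩
  have hdisj : Disjoint (gPlus n '' {k : Fin n | 2 ≤ k.val})
      (gMinus n '' {k : Fin n | 2 ≤ k.val}) := by
    rw [Set.disjoint_left]
    rintro x ⟨k, hk, rfl⟩ ⟨l, hl, h⟩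
    have := Equiv.ext_iff.mp h 1
    rw [gM1, gP1 hk] at this
    exact ne0 hl this
  rw [hGS, Set.ncard_union_eq hdisj, Set.ncard_image_of_injective _ hPinj,
    Set.ncard_image_of_injective _ hMinj, card_K hn]
  omega

section AB2
variable (i j : Fin n) (hi : 2 ≤ i.val) (hj : 2 ≤ j.val) (hij : i ≠ j)

include hi hj hij

lemma mem_ASet {x : Equiv.Perm (Fin n)} :
    x ∈ ASet n i j ↔ Gen n (gPlus n i * gPlus n j * x) := by
  have hc : ∀ y : Equiv.Perm (Fin n),
      gPlus n i * gPlus n j * (gPlus n i * gPlus n j * y) = y := fun y => by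
    rw [← mul_assoc, AA i j hi hj hij, one_mul]
  constructor
  · rintro ⟨g, hg, rfl⟩
    rw [hc]; exact hg
  · intro h
    exact ⟨_, h, hc x⟩

lemma inter_A : GenSet n ∩ ASet n i j = {gPlus n i, gMinus n j} := by
  ext x
  simp only [Set.mem_inter_iff, Set.mem_insert_iff, Set.mem_singleton_iff]
  constructor
  · rintro ⟨hx, hax⟩
    rw [mem_ASet i j hi hj hij] at hax
    exact classify i j hi hj hij hx hax
  · rintro (rfl|rfl)
    · refine ⟨⟨i, hi, Or.inl rfl⟩, (mem_ASet i j hi hj hij).mpr ?_⟩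
      rw [AgP i j hi hj hij]; exact ⟨j, hj, Or.inr rfl⟩
    · refine ⟨⟨j, hj, Or.inr rfl⟩, (mem_ASet i j hi hj hij).mpr ?_⟩
      rw [AgM i j hi hj hij]; exact ⟨i, hi, Or.inl rfl⟩

lemma inter_AB : ASet n i j ∩ ASet n j i = ∅ := by
  ext x
  simp only [Set.mem_inter_iff, Set.mem_empty_iff_false, iff_false]
  rintro ⟨h1, h2⟩
  obtain ⟨g, hg, rfl⟩ := h1
  rw [mem_ASet j i hj hi (Ne.symm hij)] at h2
  rw [← mul_assoc] at h2
  exact notGen_C_mul j i hj hi (Ne.symm hij) hg h2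

lemma main_count (hn : 4 ≤ n) :
    (GenSet n ∪ ASet n i j ∪ ASet n j i).ncard = 6 * n - 16 := by
  have h2 : 2 ≤ n := by omega
  have hGS := card_GenSet (n := n) h2
  have hA : (ASet n i j).ncard = 2 * n - 4 := by
    rw [ASet, Set.ncard_image_of_injective _ (mul_right_injective _), hGS]
  have hB : (ASet n j i).ncard = 2 * n - 4 := by
    rw [ASet, Set.ncard_image_of_injective _ (mul_right_injective _), hGS]
  have hpair1 : (gPlus n i : Equiv.Perm (Fin n)) ≠ gMinus n j := by
    intro h
    have := Equiv.ext_iff.mp h 1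
    rw [gP1 hi, gM1] at this
    exact ne0 hj this.symm
  have hpair2 : (gPlus n j : Equiv.Perm (Fin n)) ≠ gMinus n i := by
    intro h
    have := Equiv.ext_iff.mp h 1
    rw [gP1 hj, gM1] at this
    exact ne0 hi this.symm
  have hdA : (ASet n i j \ GenSet n).ncard = 2 * n - 6 := by
    have h := Set.ncard_inter_add_ncard_diff_eq_ncard (ASet n i j) (GenSet n)
    rw [Set.inter_comm, inter_A i j hi hj hij, Set.ncard_pair hpair1, hA] at h
    omega
  have hdB : (ASet n j i \ GenSet n).ncard = 2 * n - 6 := by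
    have h := Set.ncard_inter_add_ncard_diff_eq_ncard (ASet n j i) (GenSet n)
    rw [Set.inter_comm, inter_A j i hj hi (Ne.symm hij), Set.ncard_pair hpair2, hB] at h
    omega
  have e1 : GenSet n ∪ ASet n i j ∪ ASet n j i
      = (GenSet n ∪ (ASet n i j \ GenSet n)) ∪ (ASet n j i \ GenSet n) := by
    ext x
    simp only [Set.mem_union, Set.mem_diff]
    tauto
  have d1 : Disjoint (GenSet n) (ASet n i j \ GenSet n) := by
    rw [Set.disjoint_left]; rintro x hx ⟨_, hx2⟩; exact hx2 hx
  have d2 : Disjoint (GenSet n ∪ (ASet n i j \ GenSet n)) (ASet n j i \ GenSet n) := by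
    rw [Set.disjoint_left]
    rintro x (hx|⟨hx1, _⟩) ⟨hy1, hy2⟩
    · exact hy2 hx
    · have : x ∈ ASet n i j ∩ ASet n j i := ⟨hx1, hy1⟩
      rw [inter_AB i j hi hj hij] at this
      exact this
  rw [e1, Set.ncard_union_eq d2, Set.ncard_union_eq d1, hGS, hdA, hdB]
  omega

end AB2
end AGaux


namespace AGaux
variable {n : ℕ} [NeZero n]

lemma agRel_iff (p q : Equiv.Perm (Fin n)) : agRel n p q ↔ Gen n (p⁻¹ * q) := by
  constructor
  · rintro ⟨k, hk, rfl|rfl⟩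
    · exact ⟨k, hk, Or.inl (by group)⟩
    · exact ⟨k, hk, Or.inr (by group)⟩
  · rintro ⟨k, hk, h|h⟩
    · exact ⟨k, hk, Or.inl (by rw [← h]; group)⟩
    · exact ⟨k, hk, Or.inr (by rw [← h]; group)⟩

lemma adj_iff (u v : {p : Equiv.Perm (Fin n) // Equiv.Perm.sign p = 1}) :
    (AG n).Adj u v ↔ Gen n (u.1⁻¹ * v.1) := by
  rw [AG, SimpleGraph.fromRel_adj, agRel_iff, agRel_iff]
  constructor
  · rintro ⟨hne, h|h⟩
    · exact h
    · simpa [mul_inv_rev] using h.inv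
  · intro h
    refine ⟨?_, Or.inl h⟩
    rintro rfl
    rw [inv_mul_cancel] at h
    exact notGen_one n h

end AGaux


theorem stmt_5 (n : ℕ) [NeZero n] (hn : 4 ≤ n) (i j : Fin n)
    (hi : 2 ≤ i.val) (hj : 2 ≤ j.val) (hij : i ≠ j)
    (S : Set {p : Equiv.Perm (Fin n) // Equiv.Perm.sign p = 1})
    (hS : S = {v | v.1 = 1 ∨ v.1 = gPlus n i * gPlus n j ∨ v.1 = gPlus n j * gPlus n i}) :
    IsIndep (AG n) S ∧ (nbhd (AG n) S).ncard = 6 * n - 16 := by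
  subst hS
  have hji := Ne.symm hij
  have hAA := AGaux.AA i j hi hj hij
  have hBB := AGaux.AA j i hj hi hji
  have hAinv := AGaux.A_inv i j hi hj hij
  have hBinv := AGaux.A_inv j i hj hi hji
  have notGenA := AGaux.notGen_A i j hi hj hij
  have notGenB := AGaux.notGen_A j i hj hi hji
  have notGenAB := AGaux.notGen_C i j hi hj hij
  have notGenBA := AGaux.notGen_C j i hj hi hji
  have hsignA : Equiv.Perm.sign (gPlus n i * gPlus n j) = 1 := by
    rw [map_mul, AGaux.Gen.sign ⟨i, hi, Or.inl rfl⟩, AGaux.Gen.sign ⟨j, hj, Or.inl rfl⟩,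
      mul_one]
  have hsignB : Equiv.Perm.sign (gPlus n j * gPlus n i) = 1 := by
    rw [map_mul, AGaux.Gen.sign ⟨j, hj, Or.inl rfl⟩, AGaux.Gen.sign ⟨i, hi, Or.inl rfl⟩,
      mul_one]
  set A := gPlus n i * gPlus n j with hA
  set B := gPlus n j * gPlus n i with hB
  have hAcancel : ∀ x : Equiv.Perm (Fin n), A * (A * x) = x := fun x => by
    rw [← mul_assoc, hAA, one_mul]
  have hBcancel : ∀ x : Equiv.Perm (Fin n), B * (B * x) = x := fun x => by
    rw [← mul_assoc, hBB, one_mul]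
  constructor
  · -- independence
    rintro u hu v hv hadj
    rw [AGaux.adj_iff] at hadj
    simp only [Set.mem_setOf_eq] at hu hv
    rcases hu with h1|h1|h1 <;> rcases hv with h2|h2|h2 <;> rw [h1, h2] at hadj
    · exact AGaux.notGen_one n (by simpa using hadj)
    · exact notGenA (by simpa using hadj)
    · exact notGenB (by simpa using hadj)
    · exact notGenA (by rw [hAinv, mul_one] at hadj; exact hadj)
    · exact AGaux.notGen_one n (by rw [inv_mul_cancel] at hadj; exact hadj)
    · exact notGenAB (by rw [hAinv] at hadj; exact hadj)
    · exact notGenB (by rw [hBinv, mul_one] at hadj; exact hadj)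
    · exact notGenBA (by rw [hBinv] at hadj; exact hadj)
    · exact AGaux.notGen_one n (by rw [inv_mul_cancel] at hadj; exact hadj)
  · -- cardinality
    have memA : ∀ x : Equiv.Perm (Fin n),
        x ∈ AGaux.ASet n i j ↔ AGaux.Gen n (A * x) := fun x =>
      AGaux.mem_ASet i j hi hj hij
    have memB : ∀ x : Equiv.Perm (Fin n),
        x ∈ AGaux.ASet n j i ↔ AGaux.Gen n (B * x) := fun x =>
      AGaux.mem_ASet j i hj hi hji
    have himg : Subtype.val '' nbhd (AG n)
          {v : {p : Equiv.Perm (Fin n) // Equiv.Perm.sign p = 1} |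
            v.1 = 1 ∨ v.1 = A ∨ v.1 = B}
        = AGaux.GenSet n ∪ AGaux.ASet n i j ∪ AGaux.ASet n j i := by
      ext x
      constructor
      · rintro ⟨v, ⟨hvS, u, hu, hadj⟩, rfl⟩
        rw [AGaux.adj_iff] at hadj
        simp only [Set.mem_setOf_eq] at hu
        rcases hu with h|h|h <;> rw [h] at hadj
        · exact Or.inl (Or.inl (show AGaux.Gen n _ by simpa using hadj))
        · exact Or.inl (Or.inr ((memA _).mpr (by rwa [hAinv] at hadj)))
        · exact Or.inr ((memB _).mpr (by rwa [hBinv] at hadj))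
      · intro hx
        have hsign : Equiv.Perm.sign x = 1 := by
          rcases hx with (h|⟨g, hg, rfl⟩)|⟨g, hg, rfl⟩
          · exact AGaux.Gen.sign h
          · rw [map_mul, hsignA, AGaux.Gen.sign hg, mul_one]
          · rw [map_mul, hsignB, AGaux.Gen.sign hg, mul_one]
        have hnotS : ¬(x = 1 ∨ x = A ∨ x = B) := by
          rcases hx with (h|⟨g, hg, rfl⟩)|⟨g, hg, rfl⟩
          · rintro (rfl|rfl|rfl)
            · exact AGaux.notGen_one n h
            · exact notGenA h
            · exact notGenB h
          · rintro (h1|h1|h1)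
            · have h2 : g = A := by
                have := congrArg (fun y => A * y) h1
                exact (hAcancel g).symm.trans (this.trans (mul_one A))
              exact notGenA (h2 ▸ hg)
            · have h2 : g = 1 := by
                have := congrArg (fun y => A * y) h1
                exact (hAcancel g).symm.trans (this.trans hAA)
              exact AGaux.notGen_one n (h2 ▸ hg)
            · have h2 : g = A * B := by
                have := congrArg (fun y => A * y) h1
                exact (hAcancel g).symm.trans this
              exact notGenAB (by rw [← h2]; exact hg)
          · rintro (h1|h1|h1)
            · have h2 : g = B := by
                have := congrArg (fun y => B * y) h1
                exact (hBcancel g).symm.trans (this.trans (mul_one B))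
              exact notGenB (h2 ▸ hg)
            · have h2 : g = B * A := by
                have := congrArg (fun y => B * y) h1
                exact (hBcancel g).symm.trans this
              exact notGenBA (by rw [← h2]; exact hg)
            · have h2 : g = 1 := by
                have := congrArg (fun y => B * y) h1
                exact (hBcancel g).symm.trans (this.trans hBB)
              exact AGaux.notGen_one n (h2 ▸ hg)
        refine ⟨⟨x, hsign⟩, ⟨hnotS, ?_⟩, rfl⟩
        rcases hx with (h|⟨g, hg, rfl⟩)|⟨g, hg, rfl⟩
        · refine ⟨⟨1, by simp⟩, Or.inl rfl, ?_⟩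
          rw [AGaux.adj_iff]
          have h' : AGaux.Gen n x := h
          simpa using h'
        · refine ⟨⟨A, hsignA⟩, Or.inr (Or.inl rfl), ?_⟩
          rw [AGaux.adj_iff]
          show AGaux.Gen n (A⁻¹ * (A * g))
          rw [hAinv, hAcancel]
          exact hg
        · refine ⟨⟨B, hsignB⟩, Or.inr (Or.inr rfl), ?_⟩
          rw [AGaux.adj_iff]
          show AGaux.Gen n (B⁻¹ * (B * g))
          rw [hBinv, hBcancel]
          exact hg
    rw [← Set.ncard_image_of_injective _ (Subtype.val_injective), himg]
    exact AGaux.main_count i j hi hj hij hn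
end

section
/- In the split-star graph S_n^2 (n ≥ 4), any two vertices x, y at distance 1 have at most 1 common neighbor, any two vertices at distance 2 have at most 2 common neighbors, and vertices at distance at least 3 have no common neighbors. -/
section Aux
variable {n : ℕ} [NeZero n]

lemma gP0 (i : Fin n) : gPlus n i 0 = i := by
  simp [gPlus, Equiv.Perm.mul_apply]

lemma gP1 (h01 : (0:Fin n) ≠ 1) {i : Fin n} (hi0 : i ≠ 0) : gPlus n i 1 = 0 := by
  simp [gPlus, Equiv.Perm.mul_apply, Equiv.swap_apply_of_ne_of_ne h01 (Ne.symm hi0)]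

lemma gPi {i : Fin n} (hi0 : i ≠ 0) (hi1 : i ≠ 1) : gPlus n i i = 1 := by
  simp [gPlus, Equiv.Perm.mul_apply, Equiv.swap_apply_of_ne_of_ne hi0 hi1]

lemma gPx {i x : Fin n} (hx0 : x ≠ 0) (hx1 : x ≠ 1) (hxi : x ≠ i) : gPlus n i x = x := by
  simp [gPlus, Equiv.Perm.mul_apply, Equiv.swap_apply_of_ne_of_ne hx0 hx1,
    Equiv.swap_apply_of_ne_of_ne hx1 hxi]

lemma gM0 (h01 : (0:Fin n) ≠ 1) {i : Fin n} (hi1 : i ≠ 1) : gMinus n i 0 = 1 := by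
  simp [gMinus, Equiv.Perm.mul_apply, Equiv.swap_apply_of_ne_of_ne h01.symm (Ne.symm hi1)]

lemma gM1 (i : Fin n) : gMinus n i 1 = i := by
  simp [gMinus, Equiv.Perm.mul_apply]

lemma gMi {i : Fin n} (hi0 : i ≠ 0) (hi1 : i ≠ 1) : gMinus n i i = 0 := by
  simp [gMinus, Equiv.Perm.mul_apply, Equiv.swap_apply_of_ne_of_ne hi0 hi1]

lemma gMx {i x : Fin n} (hx0 : x ≠ 0) (hx1 : x ≠ 1) (hxi : x ≠ i) : gMinus n i x = x := by
  simp [gMinus, Equiv.Perm.mul_apply, Equiv.swap_apply_of_ne_of_ne hx0 hx1,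
    Equiv.swap_apply_of_ne_of_ne hx0 hxi]

lemma mul_gPlus_gMinus (h01 : (0:Fin n) ≠ 1) {i : Fin n} (hi0 : i ≠ 0) (hi1 : i ≠ 1) :
    gPlus n i * gMinus n i = 1 := by
  ext x
  simp only [Equiv.Perm.mul_apply, Equiv.Perm.one_apply]
  rcases eq_or_ne x 0 with rfl | hx0
  · rw [gM0 h01 hi1, gP1 h01 hi0]
  rcases eq_or_ne x 1 with rfl | hx1
  · rw [gM1, gPi hi0 hi1]
  rcases eq_or_ne x i with rfl | hxi
  · rw [gMi hi0 hi1, gP0]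
  · rw [gMx hx0 hx1 hxi, gPx hx0 hx1 hxi]

lemma gPlus_inv (h01 : (0:Fin n) ≠ 1) {i : Fin n} (hi0 : i ≠ 0) (hi1 : i ≠ 1) :
    (gPlus n i)⁻¹ = gMinus n i :=
  inv_eq_of_mul_eq_one_right (mul_gPlus_gMinus h01 hi0 hi1)

lemma gMinus_inv (h01 : (0:Fin n) ≠ 1) {i : Fin n} (hi0 : i ≠ 0) (hi1 : i ≠ 1) :
    (gMinus n i)⁻¹ = gPlus n i :=
  inv_eq_of_mul_eq_one_left (mul_gPlus_gMinus h01 hi0 hi1)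

lemma mul_gMinus_gPlus (h01 : (0:Fin n) ≠ 1) {i : Fin n} (hi0 : i ≠ 0) (hi1 : i ≠ 1) :
    gMinus n i * gPlus n i = 1 := by
  rw [← gPlus_inv h01 hi0 hi1]; simp

lemma gPlus_sq (h01 : (0:Fin n) ≠ 1) {i : Fin n} (hi0 : i ≠ 0) (hi1 : i ≠ 1) :
    gPlus n i * gPlus n i = gMinus n i := by
  ext x
  simp only [Equiv.Perm.mul_apply]
  rcases eq_or_ne x 0 with rfl | hx0
  · rw [gP0, gPi hi0 hi1, gM0 h01 hi1]
  rcases eq_or_ne x 1 with rfl | hx1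
  · rw [gP1 h01 hi0, gP0, gM1]
  rcases eq_or_ne x i with rfl | hxi
  · rw [gPi hi0 hi1, gP1 h01 hi0, gMi hi0 hi1]
  · rw [gPx hx0 hx1 hxi, gPx hx0 hx1 hxi, gMx hx0 hx1 hxi]

lemma gMinus_sq (h01 : (0:Fin n) ≠ 1) {i : Fin n} (hi0 : i ≠ 0) (hi1 : i ≠ 1) :
    gMinus n i * gMinus n i = gPlus n i := by
  ext x
  simp only [Equiv.Perm.mul_apply]
  rcases eq_or_ne x 0 with rfl | hx0
  · rw [gM0 h01 hi1, gM1, gP0]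
  rcases eq_or_ne x 1 with rfl | hx1
  · rw [gM1, gMi hi0 hi1, gP1 h01 hi0]
  rcases eq_or_ne x i with rfl | hxi
  · rw [gMi hi0 hi1, gM0 h01 hi1, gPi hi0 hi1]
  · rw [gMx hx0 hx1 hxi, gMx hx0 hx1 hxi, gPx hx0 hx1 hxi]

/-- membership in the generating set of the split-star graph -/
def inT (n : ℕ) [NeZero n] (w : Equiv.Perm (Fin n)) : Prop :=
  w = Equiv.swap 0 1 ∨ ∃ i : Fin n, 2 ≤ i.val ∧ (w = gPlus n i ∨ w = gMinus n i)

lemma idx_ne {i : Fin n} (hi : 2 ≤ i.val) : i ≠ 0 ∧ i ≠ 1 := by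
  constructor <;> apply Fin.ne_of_val_ne
  · simp; have h0 : ((0 : Fin n) : ℕ) = 0 := rfl; omega
  · have := Nat.mod_le 1 n
    simp [Fin.val_one']
    omega

lemma zero_ne_one_of_idx {i : Fin n} (hi : 2 ≤ i.val) : (0:Fin n) ≠ 1 := by
  have h := i.isLt
  apply Fin.ne_of_val_ne
  simp [Fin.val_one', Nat.mod_eq_of_lt (show 1 < n by omega)]

lemma inT_inv {w : Equiv.Perm (Fin n)} (h : inT n w) : inT n w⁻¹ := by
  rcases h with rfl | ⟨i, hi, rfl | rfl⟩
  · left; rw [Equiv.swap_inv]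
  · obtain ⟨hi0, hi1⟩ := idx_ne hi
    exact Or.inr ⟨i, hi, Or.inr (gPlus_inv (zero_ne_one_of_idx hi) hi0 hi1)⟩
  · obtain ⟨hi0, hi1⟩ := idx_ne hi
    exact Or.inr ⟨i, hi, Or.inl (gMinus_inv (zero_ne_one_of_idx hi) hi0 hi1)⟩

lemma inT_val (h01 : (0:Fin n) ≠ 1) {w : Equiv.Perm (Fin n)} (h : inT n w) :
    w 0 ≠ 0 ∧ w 1 ≠ 1 ∧ (w 1 = 0 ∨ w 0 = 1) := by
  rcases h with rfl | ⟨i, hi, rfl | rfl⟩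
  · simp [h01.symm, h01]
  · obtain ⟨hi0, hi1⟩ := idx_ne hi
    rw [gP0, gP1 h01 hi0]
    exact ⟨hi0, h01, Or.inl rfl⟩
  · obtain ⟨hi0, hi1⟩ := idx_ne hi
    rw [gM0 h01 hi1, gM1]
    exact ⟨h01.symm, hi1, Or.inr rfl⟩

end Aux

section Core
variable {n : ℕ} [NeZero n]

/-- candidate set for the first factor in a factorization of `z` into two generators -/
def cand (n : ℕ) [NeZero n] (z : Equiv.Perm (Fin n)) : Set (Equiv.Perm (Fin n)) :=
  if z 1 = 1 then {Equiv.swap 0 1, gMinus n (z.symm 0)}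
  else if z 0 = 0 then {Equiv.swap 0 1, gPlus n (z.symm 1)}
  else if z 1 = 0 then {gMinus n (z 0), gMinus n (z 0)}
  else if z 0 = 1 then {gPlus n (z 1), gPlus n (z 1)}
  else {gPlus n (z 1), gMinus n (z 0)}

lemma cand_pair (z : Equiv.Perm (Fin n)) : ∃ u v, cand n z = {u, v} := by
  unfold cand; split_ifs <;> exact ⟨_, _, rfl⟩

lemma mem_cand (h01 : (0:Fin n) ≠ 1) {s t : Equiv.Perm (Fin n)}
    (hs : inT n s) (ht : inT n t) (hz : s * t ≠ 1) : s ∈ cand n (s * t) := by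
  rcases hs with rfl | ⟨i, hi, rfl | rfl⟩ <;> rcases ht with rfl | ⟨j, hj, rfl | rfl⟩
  · -- a * a
    exact absurd (Equiv.swap_mul_self _ _) hz
  · -- a * gPlus j : z = swap 0 j, z 1 = 1
    obtain ⟨hj0, hj1⟩ := idx_ne hj
    have h1 : (Equiv.swap 0 1 * gPlus n j : Equiv.Perm (Fin n)) 1 = 1 := by
      rw [Equiv.Perm.mul_apply, gP1 h01 hj0, Equiv.swap_apply_left]
    unfold cand; rw [if_pos h1]; exact Set.mem_insert _ _
  · -- a * gMinus j : z 1 = j ≠ 1, z 0 = 0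
    obtain ⟨hj0, hj1⟩ := idx_ne hj
    have h1 : (Equiv.swap 0 1 * gMinus n j : Equiv.Perm (Fin n)) 1 = j := by
      rw [Equiv.Perm.mul_apply, gM1, Equiv.swap_apply_of_ne_of_ne hj0 hj1]
    have h0 : (Equiv.swap 0 1 * gMinus n j : Equiv.Perm (Fin n)) 0 = 0 := by
      rw [Equiv.Perm.mul_apply, gM0 h01 hj1, Equiv.swap_apply_right]
    unfold cand; rw [if_neg (by rw [h1]; exact hj1), if_pos h0]; exact Set.mem_insert _ _
  · -- gPlus i * a : z 1 = i ≠ 1, z 0 = 0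
    obtain ⟨hi0, hi1⟩ := idx_ne hi
    have h1 : (gPlus n i * Equiv.swap 0 1 : Equiv.Perm (Fin n)) 1 = i := by
      rw [Equiv.Perm.mul_apply, Equiv.swap_apply_right, gP0]
    have h0 : (gPlus n i * Equiv.swap 0 1 : Equiv.Perm (Fin n)) 0 = 0 := by
      rw [Equiv.Perm.mul_apply, Equiv.swap_apply_left, gP1 h01 hi0]
    have hsym : (gPlus n i * Equiv.swap 0 1 : Equiv.Perm (Fin n)).symm 1 = i := by
      rw [Equiv.symm_apply_eq, Equiv.Perm.mul_apply,
        Equiv.swap_apply_of_ne_of_ne hi0 hi1, gPi hi0 hi1]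
    unfold cand; rw [if_neg (by rw [h1]; exact hi1), if_pos h0, hsym]
    exact Set.mem_insert_iff.mpr (Or.inr rfl)
  · -- gPlus i * gPlus j
    obtain ⟨hi0, hi1⟩ := idx_ne hi
    obtain ⟨hj0, hj1⟩ := idx_ne hj
    rcases eq_or_ne j i with rfl | hij
    · -- z = gMinus j
      have h1 : (gPlus n j * gPlus n j : Equiv.Perm (Fin n)) 1 = j := by
        rw [Equiv.Perm.mul_apply, gP1 h01 hj0, gP0]
      have h0 : (gPlus n j * gPlus n j : Equiv.Perm (Fin n)) 0 = 1 := by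
        rw [Equiv.Perm.mul_apply, gP0, gPi hj0 hj1]
      unfold cand
      rw [if_neg (by rw [h1]; exact hj1), if_neg (by rw [h0]; exact h01.symm),
        if_neg (by rw [h1]; exact hj0), if_pos h0, h1]
      exact Set.mem_insert _ _
    · have h1 : (gPlus n i * gPlus n j : Equiv.Perm (Fin n)) 1 = i := by
        rw [Equiv.Perm.mul_apply, gP1 h01 hj0, gP0]
      have h0 : (gPlus n i * gPlus n j : Equiv.Perm (Fin n)) 0 = j := by
        rw [Equiv.Perm.mul_apply, gP0, gPx hj0 hj1 hij]
      unfold cand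
      rw [if_neg (by rw [h1]; exact hi1), if_neg (by rw [h0]; exact hj0),
        if_neg (by rw [h1]; exact hi0), if_neg (by rw [h0]; exact hj1), h1]
      exact Set.mem_insert _ _
  · -- gPlus i * gMinus j
    obtain ⟨hi0, hi1⟩ := idx_ne hi
    obtain ⟨hj0, hj1⟩ := idx_ne hj
    rcases eq_or_ne j i with rfl | hij
    · exact absurd (mul_gPlus_gMinus h01 hj0 hj1) hz
    · have hij' : i ≠ j := hij.symm
      have h1 : (gPlus n i * gMinus n j : Equiv.Perm (Fin n)) 1 = j := by
        rw [Equiv.Perm.mul_apply, gM1, gPx hj0 hj1 hij]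
      have h0 : (gPlus n i * gMinus n j : Equiv.Perm (Fin n)) 0 = 0 := by
        rw [Equiv.Perm.mul_apply, gM0 h01 hj1, gP1 h01 hi0]
      have hsym : (gPlus n i * gMinus n j : Equiv.Perm (Fin n)).symm 1 = i := by
        rw [Equiv.symm_apply_eq, Equiv.Perm.mul_apply, gMx hi0 hi1 hij',
          gPi hi0 hi1]
      unfold cand; rw [if_neg (by rw [h1]; exact hj1), if_pos h0, hsym]
      exact Set.mem_insert_iff.mpr (Or.inr rfl)
  · -- gMinus i * a : z 1 = 1
    obtain ⟨hi0, hi1⟩ := idx_ne hi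
    have h1 : (gMinus n i * Equiv.swap 0 1 : Equiv.Perm (Fin n)) 1 = 1 := by
      rw [Equiv.Perm.mul_apply, Equiv.swap_apply_right, gM0 h01 hi1]
    have hsym : (gMinus n i * Equiv.swap 0 1 : Equiv.Perm (Fin n)).symm 0 = i := by
      rw [Equiv.symm_apply_eq, Equiv.Perm.mul_apply,
        Equiv.swap_apply_of_ne_of_ne hi0 hi1, gMi hi0 hi1]
    unfold cand; rw [if_pos h1, hsym]
    exact Set.mem_insert_iff.mpr (Or.inr rfl)
  · -- gMinus i * gPlus j
    obtain ⟨hi0, hi1⟩ := idx_ne hi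
    obtain ⟨hj0, hj1⟩ := idx_ne hj
    rcases eq_or_ne j i with rfl | hij
    · exact absurd (mul_gMinus_gPlus h01 hj0 hj1) hz
    · have hij' : i ≠ j := hij.symm
      have h1 : (gMinus n i * gPlus n j : Equiv.Perm (Fin n)) 1 = 1 := by
        rw [Equiv.Perm.mul_apply, gP1 h01 hj0, gM0 h01 hi1]
      have hsym : (gMinus n i * gPlus n j : Equiv.Perm (Fin n)).symm 0 = i := by
        rw [Equiv.symm_apply_eq, Equiv.Perm.mul_apply, gPx hi0 hi1 hij',
          gMi hi0 hi1]
      unfold cand; rw [if_pos h1, hsym]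
      exact Set.mem_insert_iff.mpr (Or.inr rfl)
  · -- gMinus i * gMinus j
    obtain ⟨hi0, hi1⟩ := idx_ne hi
    obtain ⟨hj0, hj1⟩ := idx_ne hj
    rcases eq_or_ne j i with rfl | hij
    · have h1 : (gMinus n j * gMinus n j : Equiv.Perm (Fin n)) 1 = 0 := by
        rw [Equiv.Perm.mul_apply, gM1, gMi hj0 hj1]
      have h0 : (gMinus n j * gMinus n j : Equiv.Perm (Fin n)) 0 = j := by
        rw [Equiv.Perm.mul_apply, gM0 h01 hj1, gM1]
      unfold cand
      rw [if_neg (by rw [h1]; exact h01), if_neg (by rw [h0]; exact hj0),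
        if_pos h1, h0]
      exact Set.mem_insert _ _
    · have h1 : (gMinus n i * gMinus n j : Equiv.Perm (Fin n)) 1 = j := by
        rw [Equiv.Perm.mul_apply, gM1, gMx hj0 hj1 hij]
      have h0 : (gMinus n i * gMinus n j : Equiv.Perm (Fin n)) 0 = i := by
        rw [Equiv.Perm.mul_apply, gM0 h01 hj1, gM1]
      unfold cand
      rw [if_neg (by rw [h1]; exact hj1), if_neg (by rw [h0]; exact hi0),
        if_neg (by rw [h1]; exact hj0), if_neg (by rw [h0]; exact hi1), h0]
      exact Set.mem_insert_iff.mpr (Or.inr rfl)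

lemma eq_inv_of_inT (h01 : (0:Fin n) ≠ 1) {s t : Equiv.Perm (Fin n)}
    (hs : inT n s) (ht : inT n t) (hmem : inT n (s * t)) : s = (s * t)⁻¹ := by
  obtain ⟨hv0, hv1, hv2⟩ := inT_val h01 hmem
  rcases hs with rfl | ⟨i, hi, rfl | rfl⟩ <;> rcases ht with rfl | ⟨j, hj, rfl | rfl⟩
  · exact absurd (by rw [Equiv.swap_mul_self]; rfl) hv0
  · obtain ⟨hj0, hj1⟩ := idx_ne hj
    exact absurd (by rw [Equiv.Perm.mul_apply, gP1 h01 hj0, Equiv.swap_apply_left]) hv1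
  · obtain ⟨hj0, hj1⟩ := idx_ne hj
    exact absurd (by rw [Equiv.Perm.mul_apply, gM0 h01 hj1, Equiv.swap_apply_right]) hv0
  · obtain ⟨hi0, hi1⟩ := idx_ne hi
    exact absurd (by rw [Equiv.Perm.mul_apply, Equiv.swap_apply_left, gP1 h01 hi0]) hv0
  · obtain ⟨hi0, hi1⟩ := idx_ne hi
    obtain ⟨hj0, hj1⟩ := idx_ne hj
    rcases eq_or_ne j i with rfl | hij
    · rw [gPlus_sq h01 hj0 hj1, gMinus_inv h01 hj0 hj1]
    · exfalso
      have h1 : (gPlus n i * gPlus n j : Equiv.Perm (Fin n)) 1 = i := by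
        rw [Equiv.Perm.mul_apply, gP1 h01 hj0, gP0]
      have h0 : (gPlus n i * gPlus n j : Equiv.Perm (Fin n)) 0 = j := by
        rw [Equiv.Perm.mul_apply, gP0, gPx hj0 hj1 hij]
      rcases hv2 with h | h
      · rw [h1] at h; exact hi0 h
      · rw [h0] at h; exact hj1 h
  · obtain ⟨hi0, hi1⟩ := idx_ne hi
    obtain ⟨hj0, hj1⟩ := idx_ne hj
    exact absurd (by rw [Equiv.Perm.mul_apply, gM0 h01 hj1, gP1 h01 hi0]) hv0
  · obtain ⟨hi0, hi1⟩ := idx_ne hi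
    exact absurd (by rw [Equiv.Perm.mul_apply, Equiv.swap_apply_right, gM0 h01 hi1]) hv1
  · obtain ⟨hi0, hi1⟩ := idx_ne hi
    obtain ⟨hj0, hj1⟩ := idx_ne hj
    exact absurd (by rw [Equiv.Perm.mul_apply, gP1 h01 hj0, gM0 h01 hi1]) hv1
  · obtain ⟨hi0, hi1⟩ := idx_ne hi
    obtain ⟨hj0, hj1⟩ := idx_ne hj
    rcases eq_or_ne j i with rfl | hij
    · rw [gMinus_sq h01 hj0 hj1, gPlus_inv h01 hj0 hj1]
    · exfalso
      have h1 : (gMinus n i * gMinus n j : Equiv.Perm (Fin n)) 1 = j := by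
        rw [Equiv.Perm.mul_apply, gM1, gMx hj0 hj1 hij]
      have h0 : (gMinus n i * gMinus n j : Equiv.Perm (Fin n)) 0 = i := by
        rw [Equiv.Perm.mul_apply, gM0 h01 hj1, gM1]
      rcases hv2 with h | h
      · rw [h1] at h; exact hj0 h
      · rw [h0] at h; exact hi1 h

end Core

section Main
variable {n : ℕ} [NeZero n]

lemma rel_inT {p q : Equiv.Perm (Fin n)}
    (h : q = p * Equiv.swap 0 1 ∨ agRel n p q) : inT n (p⁻¹ * q) := by
  rcases h with rfl | ⟨i, hi, rfl | rfl⟩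
  · rw [inv_mul_cancel_left]; exact Or.inl rfl
  · rw [inv_mul_cancel_left]; exact Or.inr ⟨i, hi, Or.inl rfl⟩
  · rw [inv_mul_cancel_left]; exact Or.inr ⟨i, hi, Or.inr rfl⟩

lemma adj_inT {p q : Equiv.Perm (Fin n)} (h : (SplitStar n).Adj p q) :
    inT n (p⁻¹ * q) := by
  rw [SplitStar, SimpleGraph.fromRel_adj] at h
  rcases h.2 with h' | h'
  · exact rel_inT h'
  · have := inT_inv (rel_inT h')
    rwa [mul_inv_rev, inv_inv] at this


theorem stmt_12 (n : ℕ) [NeZero n] (hn : 4 ≤ n) (x y : Equiv.Perm (Fin n)) :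
    ((SplitStar n).dist x y = 1 →
      {v | (SplitStar n).Adj x v ∧ (SplitStar n).Adj y v}.ncard ≤ 1) ∧
    ((SplitStar n).dist x y = 2 →
      {v | (SplitStar n).Adj x v ∧ (SplitStar n).Adj y v}.ncard ≤ 2) ∧
    (3 ≤ (SplitStar n).dist x y →
      {v | (SplitStar n).Adj x v ∧ (SplitStar n).Adj y v}.ncard = 0) := by
  have h01 : (0:Fin n) ≠ 1 := by
    apply Fin.ne_of_val_ne
    simp [Fin.val_one', Nat.mod_eq_of_lt (show 1 < n by omega)]
  refine ⟨?_, ?_, ?_⟩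
  · intro h
    have hadj : (SplitStar n).Adj x y := SimpleGraph.dist_eq_one_iff_adj.mp h
    have hz : inT n (x⁻¹ * y) := adj_inT hadj
    have hsub : {v | (SplitStar n).Adj x v ∧ (SplitStar n).Adj y v} ⊆
        {x * (x⁻¹ * y)⁻¹} := by
      rintro v ⟨hxv, hyv⟩
      have hw : inT n (x⁻¹ * v) := adj_inT hxv
      have hu : inT n ((y⁻¹ * v)⁻¹) := inT_inv (adj_inT hyv)
      have hprod : (x⁻¹ * v) * (y⁻¹ * v)⁻¹ = x⁻¹ * y := by group
      have heq := eq_inv_of_inT h01 hw hu (by rw [hprod]; exact hz)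
      rw [hprod] at heq
      have : v = x * (x⁻¹ * y)⁻¹ := by rw [← heq, mul_inv_cancel_left]
      exact this
    calc {v | (SplitStar n).Adj x v ∧ (SplitStar n).Adj y v}.ncard
        ≤ ({x * (x⁻¹ * y)⁻¹} : Set _).ncard :=
          Set.ncard_le_ncard hsub (Set.finite_singleton _)
      _ = 1 := Set.ncard_singleton _
  · intro h
    have hne : x ≠ y := by
      intro he; rw [he, SimpleGraph.dist_self] at h; omega
    obtain ⟨u1, u2, hc⟩ := cand_pair (n := n) (x⁻¹ * y)
    have hsub : {v | (SplitStar n).Adj x v ∧ (SplitStar n).Adj y v} ⊆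
        {x * u1, x * u2} := by
      rintro v ⟨hxv, hyv⟩
      have hw : inT n (x⁻¹ * v) := adj_inT hxv
      have hu : inT n ((y⁻¹ * v)⁻¹) := inT_inv (adj_inT hyv)
      have hprod : (x⁻¹ * v) * (y⁻¹ * v)⁻¹ = x⁻¹ * y := by group
      have hz1 : (x⁻¹ * v) * (y⁻¹ * v)⁻¹ ≠ 1 := by
        rw [hprod]; intro hh; exact hne (by rwa [inv_mul_eq_one] at hh)
      have hmem := mem_cand h01 hw hu hz1
      rw [hprod, hc] at hmem
      simp only [Set.mem_insert_iff, Set.mem_singleton_iff] at hmem ⊢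
      rcases hmem with h1 | h1
      · left; rw [← h1, mul_inv_cancel_left]
      · right; rw [← h1, mul_inv_cancel_left]
    calc {v | (SplitStar n).Adj x v ∧ (SplitStar n).Adj y v}.ncard
        ≤ ({x * u1, x * u2} : Set _).ncard :=
          Set.ncard_le_ncard hsub (Set.toFinite _)
      _ ≤ ({x * u2} : Set _).ncard + 1 := Set.ncard_insert_le _ _
      _ ≤ 2 := by rw [Set.ncard_singleton]
  · intro h
    rw [Set.ncard_eq_zero (Set.toFinite _)]
    by_contra hne
    obtain ⟨v, hxv, hyv⟩ := Set.nonempty_iff_ne_empty.mpr hne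
    have hle := SimpleGraph.dist_le
      (SimpleGraph.Walk.cons hxv (SimpleGraph.Walk.cons hyv.symm SimpleGraph.Walk.nil))
    simp only [SimpleGraph.Walk.length_cons, SimpleGraph.Walk.length_nil] at hle
    omega
end Main
end
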